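/- Let 0 < α < 1, κ > 0, p > 0, L > 0, T > 0. Let w : [0, 1] × [0, T] → ℝ be continuously differentiable in τ on (0, T] and twice continuously differentiable in v, with ∂w/∂τ, (1/(ξ(p − L ξ^{−α/2}))) ∂w/∂v and (L − p ξ^{α/2})^{−2} ∂²w/∂v² integrable in the time variable on (0, τ) for each τ ∈ (0, T] and v ∈ (0, 1), and w(v, τ) → w(v, 0) as τ → 0⁺. Suppose w satisfies, for all v ∈ (0, 1) and τ ∈ (0, T], (1/Γ(1−α)) ∫₀^τ (τ−ξ)^{−α} (∂w/∂ξ)(v, ξ) dξ − (α p (v − 1)/(2Γ(1−α))) ∫₀^τ (τ−ξ)^{−α} (ξ (p − L ξ^{−α/2}))^{−1} (∂w/∂v)(v, ξ) dξ = (κ/(L − p τ^{α/2})²) (∂²w/∂v²)(v, τ). Then for all v ∈ (0, 1) and τ ∈ (0, T]: w(v, τ) = w(v, 0) + (α p (v − 1)/2) ∫₀^τ (ξ (p − L ξ^{−α/2}))^{−1} (∂w/∂v)(v, ξ) dξ + (κ/Γ(α)) ∫₀^τ (τ−ξ)^{α−1} (L − p ξ^{α/2})^{−2} (∂²w/∂v²)(v,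 ξ) dξ. -/

import Mathlib

open Real MeasureTheory Filter

lemma beta01 {α : ℝ} (hα0 : 0 < α) (hα1 : α < 1) :
    ∫ x in (0:ℝ)..1, (1 - x) ^ (α - 1) * x ^ (-α) = Real.Gamma α * Real.Gamma (1 - α) := by
  have h1 : (0:ℝ) < 1 - α := by linarith
  have hB := Complex.Gamma_mul_Gamma_eq_betaIntegral (s := ((1 - α : ℝ) : ℂ)) (t := ((α : ℝ) : ℂ))
      (by simpa using h1) (by simpa using hα0)
  have hsum : ((1 - α : ℝ) : ℂ) + ((α : ℝ) : ℂ) = 1 := by push_cast; ring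
  rw [hsum, Complex.Gamma_one, one_mul] at hB
  have hint : Complex.betaIntegral ((1 - α : ℝ) : ℂ) ((α : ℝ) : ℂ)
      = ((∫ x in (0:ℝ)..1, (1 - x) ^ (α - 1) * x ^ (-α) : ℝ) : ℂ) := by
    rw [Complex.betaIntegral, ← intervalIntegral.integral_ofReal]
    refine intervalIntegral.integral_congr fun x hx => ?_
    rw [Set.uIcc_of_le (by norm_num : (0:ℝ) ≤ 1)] at hx
    have hx0 : (0:ℝ) ≤ x := hx.1
    have hx1 : (0:ℝ) ≤ 1 - x := by linarith [hx.2]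
    have e1 : ((1 - α : ℝ) : ℂ) - 1 = ((-α : ℝ) : ℂ) := by push_cast; ring
    have e2 : ((α : ℝ) : ℂ) - 1 = ((α - 1 : ℝ) : ℂ) := by push_cast; ring
    rw [e1, e2, ← Complex.ofReal_cpow hx0, ← Complex.ofReal_one, ← Complex.ofReal_sub,
      ← Complex.ofReal_cpow hx1]
    push_cast
    ring
  rw [hint] at hB
  have := hB.symm
  rw [Complex.Gamma_ofReal, Complex.Gamma_ofReal, ← Complex.ofReal_mul] at this
  have := Complex.ofReal_inj.mp this
  linarith

lemma beta_shift {α : ℝ} (hα0 : 0 < α) (hα1 : α < 1) {ξ τ : ℝ} (h : ξ < τ) :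
    ∫ s in ξ..τ, (τ - s) ^ (α - 1) * (s - ξ) ^ (-α) = Real.Gamma α * Real.Gamma (1 - α) := by
  have hpos : (0:ℝ) < τ - ξ := sub_pos.2 h
  have hc : τ - ξ ≠ 0 := ne_of_gt hpos
  have hsub := intervalIntegral.integral_comp_mul_add
    (a := 0) (b := 1) (f := fun s => (τ - s) ^ (α - 1) * (s - ξ) ^ (-α)) hc ξ
  simp only [mul_zero, zero_add, mul_one] at hsub
  have hend : τ - ξ + ξ = τ := by ring
  rw [hend] at hsub
  -- hsub : ∫ x in 0..1, f ((τ-ξ)*x + ξ) = (τ-ξ)⁻¹ • ∫ s in ξ..τ, f s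
  have hcongr : ∫ x in (0:ℝ)..1, (τ - ((τ - ξ) * x + ξ)) ^ (α - 1) * (((τ - ξ) * x + ξ) - ξ) ^ (-α)
      = ∫ x in (0:ℝ)..1, ((τ - ξ) ^ (α - 1) * (τ - ξ) ^ (-α)) * ((1 - x) ^ (α - 1) * x ^ (-α)) := by
    refine intervalIntegral.integral_congr fun x hx => ?_
    rw [Set.uIcc_of_le (by norm_num : (0:ℝ) ≤ 1)] at hx
    have e1 : τ - ((τ - ξ) * x + ξ) = (τ - ξ) * (1 - x) := by ring
    have e2 : ((τ - ξ) * x + ξ) - ξ = (τ - ξ) * x := by ring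
    rw [e1, e2, Real.mul_rpow hpos.le (by linarith [hx.2]), Real.mul_rpow hpos.le hx.1]
    ring
  rw [hcongr, intervalIntegral.integral_const_mul, beta01 hα0 hα1, smul_eq_mul] at hsub
  have hpow : (τ - ξ) ^ (α - 1) * (τ - ξ) ^ (-α) = (τ - ξ)⁻¹ := by
    rw [← Real.rpow_add hpos, show α - 1 + -α = -1 by ring, Real.rpow_neg_one]
  rw [hpow] at hsub
  have := mul_left_cancel₀ (inv_ne_zero hc) hsub
  linarith [this]

lemma betaKernel_intervalIntegrable {α : ℝ} (hα0 : 0 < α) (hα1 : α < 1) {ξ τ : ℝ} (h : ξ < τ) :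
    IntervalIntegrable (fun s => (τ - s) ^ (α - 1) * (s - ξ) ^ (-α)) volume ξ τ := by
  set m := (ξ + τ) / 2 with hm
  have hξm : ξ < m := by simp [hm]; linarith
  have hmτ : m < τ := by simp [hm]; linarith
  have part1 : IntervalIntegrable (fun s => (τ - s) ^ (α - 1) * (s - ξ) ^ (-α)) volume ξ m := by
    have hi : IntervalIntegrable (fun s => (s - ξ) ^ (-α)) volume ξ m := by
      have := (intervalIntegral.intervalIntegrable_rpow' (a := 0) (b := m - ξ)
        (r := -α) (by linarith)).comp_sub_right ξ
      simpa using this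
    refine hi.continuousOn_mul ?_
    have : ∀ x ∈ Set.uIcc ξ m, τ - x ≠ 0 := by
      intro x hx
      rw [Set.uIcc_of_le hξm.le] at hx
      have := hx.2; intro hcon; nlinarith [sub_eq_zero.mp hcon]
    exact ContinuousOn.rpow_const (by fun_prop) fun x hx => Or.inl (this x hx)
  have part2 : IntervalIntegrable (fun s => (τ - s) ^ (α - 1) * (s - ξ) ^ (-α)) volume m τ := by
    have hi : IntervalIntegrable (fun s => (τ - s) ^ (α - 1)) volume m τ := by
      have := (intervalIntegral.intervalIntegrable_rpow' (a := 0) (b := τ - m)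
        (r := α - 1) (by linarith)).comp_sub_left τ
      simpa using this.symm
    refine hi.mul_continuousOn ?_
    have : ∀ x ∈ Set.uIcc m τ, x - ξ ≠ 0 := by
      intro x hx
      rw [Set.uIcc_of_le hmτ.le] at hx
      have := hx.1; intro hcon; nlinarith [sub_eq_zero.mp hcon]
    exact ContinuousOn.rpow_const (by fun_prop) fun x hx => Or.inl (this x hx)
  exact part1.trans part2

lemma key_fubini {α τ : ℝ} (hα0 : 0 < α) (hα1 : α < 1) (hτ : 0 < τ)
    {f : ℝ → ℝ} (hf : IntervalIntegrable f volume 0 τ) :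
    IntegrableOn (fun s => (τ - s) ^ (α - 1) * ∫ ξ in (0:ℝ)..s, (s - ξ) ^ (-α) * f ξ)
      (Set.Ioc 0 τ) ∧
    ∫ s in Set.Ioc 0 τ, ((τ - s) ^ (α - 1) * ∫ ξ in (0:ℝ)..s, (s - ξ) ^ (-α) * f ξ)
      = (Real.Gamma α * Real.Gamma (1 - α)) * ∫ ξ in (0:ℝ)..τ, f ξ := by
  set μ : Measure ℝ := volume.restrict (Set.Ioc 0 τ) with hμ
  have hfi : IntegrableOn f (Set.Ioc 0 τ) := hf.1
  set F : ℝ × ℝ → ℝ :=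
    ({q : ℝ × ℝ | q.2 ≤ q.1}).indicator
      (fun q => (τ - q.1) ^ (α - 1) * ((q.1 - q.2) ^ (-α) * f q.2)) with hF
  -- measurability
  have hFmeas : AEStronglyMeasurable F (μ.prod μ) := by
    refine AEStronglyMeasurable.indicator ?_ (measurableSet_le measurable_snd measurable_fst)
    refine AEStronglyMeasurable.mul ?_ (AEStronglyMeasurable.mul ?_ ?_)
    · exact (Measurable.aestronglyMeasurable (by fun_prop :
        Measurable (fun q : ℝ × ℝ => (τ - q.1) ^ (α - 1))))
    · exact (Measurable.aestronglyMeasurable (by fun_prop :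
        Measurable (fun q : ℝ × ℝ => (q.1 - q.2) ^ (-α))))
    · exact hfi.aestronglyMeasurable.comp_snd
  -- a.e. membership in the open interval
  have hae : ∀ᵐ ξ ∂μ, ξ ∈ Set.Ioo 0 τ := by
    rw [hμ, ← Measure.restrict_congr_set Ioo_ae_eq_Ioc]
    exact ae_restrict_mem measurableSet_Ioo
  -- sections as indicator functions
  have hsec : ∀ ξ : ℝ, (fun s => F (s, ξ)) =
      (Set.Ici ξ).indicator (fun s => (τ - s) ^ (α - 1) * ((s - ξ) ^ (-α) * f ξ)) := by
    intro ξ; funext s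
    simp only [hF, Set.indicator_apply, Set.mem_setOf_eq, Set.mem_Ici]
  have hrr : ∀ ξ ∈ Set.Ioo 0 τ, μ.restrict (Set.Ici ξ) = volume.restrict (Set.Icc ξ τ) := by
    intro ξ hξ
    rw [hμ, Measure.restrict_restrict measurableSet_Ici]
    congr 1
    ext x
    simp only [Set.mem_inter_iff, Set.mem_Ici, Set.mem_Ioc, Set.mem_Icc]
    constructor
    · rintro ⟨h1, _, h3⟩; exact ⟨h1, h3⟩
    · rintro ⟨h1, h2⟩; exact ⟨h1, lt_of_lt_of_le hξ.1 h1, h2⟩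
  -- section integrability
  have hsecint : ∀ ξ ∈ Set.Ioo 0 τ, Integrable (fun s => F (s, ξ)) μ := by
    intro ξ hξ
    rw [hsec ξ, integrable_indicator_iff measurableSet_Ici]
    show Integrable _ (μ.restrict _)
    rw [hrr ξ hξ]
    have hIoc : IntegrableOn (fun s => (τ - s) ^ (α - 1) * ((s - ξ) ^ (-α) * f ξ))
        (Set.Ioc ξ τ) := by
      have := ((betaKernel_intervalIntegrable hα0 hα1 hξ.2).1.mul_const (f ξ))
      simp only [mul_assoc] at this
      exact this
    exact (integrableOn_Icc_iff_integrableOn_Ioc).2 hIoc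
  -- value of section integrals (without norm)
  have hsecval : ∀ ξ ∈ Set.Ioo 0 τ,
      ∫ s, F (s, ξ) ∂μ = (Real.Gamma α * Real.Gamma (1 - α)) * f ξ := by
    intro ξ hξ
    rw [hsec ξ, integral_indicator measurableSet_Ici]
    show ∫ s in Set.Ici ξ, _ ∂μ = _
    rw [show ∫ s in Set.Ici ξ, (τ - s) ^ (α - 1) * ((s - ξ) ^ (-α) * f ξ) ∂μ
        = ∫ s in Set.Icc ξ τ, (τ - s) ^ (α - 1) * ((s - ξ) ^ (-α) * f ξ) from by
      rw [← hrr ξ hξ]]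
    rw [MeasureTheory.integral_Icc_eq_integral_Ioc, ← intervalIntegral.integral_of_le hξ.2.le]
    have : ∫ s in ξ..τ, (τ - s) ^ (α - 1) * ((s - ξ) ^ (-α) * f ξ)
        = (∫ s in ξ..τ, (τ - s) ^ (α - 1) * (s - ξ) ^ (-α)) * f ξ := by
      rw [← intervalIntegral.integral_mul_const]
      exact intervalIntegral.integral_congr fun s _ => by ring
    rw [this, beta_shift hα0 hα1 hξ.2]
  -- value of section integrals of norms
  have hsecnorm : ∀ ξ ∈ Set.Ioo 0 τ,
      ∫ s, ‖F (s, ξ)‖ ∂μ = (Real.Gamma α * Real.Gamma (1 - α)) * ‖f ξ‖ := by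
    intro ξ hξ
    have : (fun s => ‖F (s, ξ)‖) =
        (Set.Ici ξ).indicator (fun s => ‖(τ - s) ^ (α - 1) * ((s - ξ) ^ (-α) * f ξ)‖) := by
      rw [show (fun s => ‖F (s, ξ)‖) = fun s => ‖(fun s => F (s, ξ)) s‖ from rfl, hsec ξ]
      funext s
      exact norm_indicator_eq_indicator_norm _ s
    rw [this, integral_indicator measurableSet_Ici]
    rw [show ∫ s in Set.Ici ξ, ‖(τ - s) ^ (α - 1) * ((s - ξ) ^ (-α) * f ξ)‖ ∂μ
        = ∫ s in Set.Icc ξ τ, ‖(τ - s) ^ (α - 1) * ((s - ξ) ^ (-α) * f ξ)‖ from by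
      rw [← hrr ξ hξ]]
    rw [MeasureTheory.integral_Icc_eq_integral_Ioc, ← intervalIntegral.integral_of_le hξ.2.le]
    have hcg : ∫ s in ξ..τ, ‖(τ - s) ^ (α - 1) * ((s - ξ) ^ (-α) * f ξ)‖
        = (∫ s in ξ..τ, (τ - s) ^ (α - 1) * (s - ξ) ^ (-α)) * ‖f ξ‖ := by
      rw [← intervalIntegral.integral_mul_const]
      refine intervalIntegral.integral_congr fun s hs => ?_
      rw [Set.uIcc_of_le hξ.2.le] at hs
      have h1 : (0:ℝ) ≤ (τ - s) ^ (α - 1) := Real.rpow_nonneg (by linarith [hs.2]) _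
      have h2 : (0:ℝ) ≤ (s - ξ) ^ (-α) := Real.rpow_nonneg (by linarith [hs.1]) _
      rw [norm_mul, norm_mul, Real.norm_of_nonneg h1, Real.norm_of_nonneg h2]
      ring
    rw [hcg, beta_shift hα0 hα1 hξ.2]
  -- full integrability on the product
  have hFint : Integrable F (μ.prod μ) := by
    rw [MeasureTheory.integrable_prod_iff' hFmeas]
    constructor
    · exact hae.mono fun ξ hξ => hsecint ξ hξ
    · have hIG : Integrable (fun ξ => (Real.Gamma α * Real.Gamma (1 - α)) * ‖f ξ‖) μ :=
        (hfi.norm.const_mul _)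
      exact hIG.congr ((hae.mono fun ξ hξ => (hsecnorm ξ hξ).symm))
  -- identify the inner integral (in ξ) with the interval integral
  have hinner : ∀ s ∈ Set.Ioc 0 τ,
      ∫ ξ, F (s, ξ) ∂μ = (τ - s) ^ (α - 1) * ∫ ξ in (0:ℝ)..s, (s - ξ) ^ (-α) * f ξ := by
    intro s hs
    have hsec2 : (fun ξ => F (s, ξ)) =
        (Set.Iic s).indicator (fun ξ => (τ - s) ^ (α - 1) * ((s - ξ) ^ (-α) * f ξ)) := by
      funext ξ
      simp only [hF, Set.indicator_apply, Set.mem_setOf_eq, Set.mem_Iic]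
    rw [hsec2, integral_indicator measurableSet_Iic]
    have hrr2 : μ.restrict (Set.Iic s) = volume.restrict (Set.Ioc 0 s) := by
      rw [hμ, Measure.restrict_restrict measurableSet_Iic]
      congr 1
      ext x
      simp only [Set.mem_inter_iff, Set.mem_Iic, Set.mem_Ioc]
      constructor
      · rintro ⟨h1, h2, _⟩; exact ⟨h2, h1⟩
      · rintro ⟨h1, h2⟩; exact ⟨h2, h1, h2.trans hs.2⟩
    rw [show ∫ ξ in Set.Iic s, (τ - s) ^ (α - 1) * ((s - ξ) ^ (-α) * f ξ) ∂μ
        = ∫ ξ in Set.Ioc 0 s, (τ - s) ^ (α - 1) * ((s - ξ) ^ (-α) * f ξ) from by rw [← hrr2]]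
    rw [MeasureTheory.integral_const_mul, ← intervalIntegral.integral_of_le hs.1.le]
  -- first conclusion
  have hIG : Integrable (fun s => ∫ ξ, F (s, ξ) ∂μ) μ := hFint.integral_prod_left
  have haes : ∀ᵐ s ∂μ, s ∈ Set.Ioc 0 τ := ae_restrict_mem measurableSet_Ioc
  have hIG' : IntegrableOn
      (fun s => (τ - s) ^ (α - 1) * ∫ ξ in (0:ℝ)..s, (s - ξ) ^ (-α) * f ξ) (Set.Ioc 0 τ) :=
    hIG.congr (haes.mono fun s hs => hinner s hs)
  refine ⟨hIG', ?_⟩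
  -- second conclusion via Fubini
  have hswap := MeasureTheory.integral_integral_swap
    (f := fun s ξ => F (s, ξ)) (μ := μ) (ν := μ) (by exact hFint)
  calc ∫ s in Set.Ioc 0 τ, ((τ - s) ^ (α - 1) * ∫ ξ in (0:ℝ)..s, (s - ξ) ^ (-α) * f ξ)
      = ∫ s, (∫ ξ, F (s, ξ) ∂μ) ∂μ :=
        integral_congr_ae (haes.mono fun s hs => (hinner s hs).symm)
    _ = ∫ ξ, (∫ s, F (s, ξ) ∂μ) ∂μ := hswap
    _ = ∫ ξ, ((Real.Gamma α * Real.Gamma (1 - α)) * f ξ) ∂μ :=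
        integral_congr_ae (hae.mono fun ξ hξ => hsecval ξ hξ)
    _ = (Real.Gamma α * Real.Gamma (1 - α)) * ∫ ξ in (0:ℝ)..τ, f ξ := by
        rw [MeasureTheory.integral_const_mul, ← intervalIntegral.integral_of_le hτ.le]

lemma ftc_limit {T τ : ℝ} (hτ : 0 < τ) (hτT : τ ≤ T) {f : ℝ → ℝ}
    (hreg : ContDiffOn ℝ 1 f (Set.Ioc 0 T))
    (hint : IntervalIntegrable (fun ξ => deriv f ξ) volume 0 τ)
    (h0 : Tendsto f (nhdsWithin 0 (Set.Ioi 0)) (nhds (f 0))) :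
    f τ = f 0 + ∫ ξ in (0:ℝ)..τ, deriv f ξ := by
  have hderiv : ∀ x ∈ Set.Ioo (0:ℝ) T, HasDerivAt f (deriv f x) x := by
    intro x hx
    have hmem : Set.Ioc (0:ℝ) T ∈ nhds x :=
      mem_nhds_iff.2 ⟨Set.Ioo 0 T, Set.Ioo_subset_Ioc_self, isOpen_Ioo, hx⟩
    exact ((hreg.differentiableOn one_ne_zero x (Set.Ioo_subset_Ioc_self hx)).differentiableAt
      hmem).hasDerivAt
  have key : ∀ ε ∈ Set.Ioo (0:ℝ) τ, ∫ ξ in ε..τ, deriv f ξ = f τ - f ε := by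
    intro ε hε
    refine intervalIntegral.integral_eq_sub_of_hasDeriv_right_of_le hε.2.le
      (hreg.continuousOn.mono ?_) (fun x hx => ?_) ?_
    · intro x hx
      exact ⟨lt_of_lt_of_le hε.1 hx.1, hx.2.trans hτT⟩
    · exact (hderiv x ⟨hε.1.trans hx.1, lt_of_lt_of_le hx.2 hτT⟩).hasDerivWithinAt
    · exact hint.mono_set (Set.uIcc_subset_uIcc
        (by rw [Set.uIcc_of_le hτ.le]; exact ⟨hε.1.le, hε.2.le⟩)
        (by rw [Set.uIcc_of_le hτ.le]; exact ⟨hτ.le, le_rfl⟩))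
  haveI hne : (nhdsWithin (0:ℝ) (Set.Ioo 0 τ)).NeBot := by
    rw [← mem_closure_iff_nhdsWithin_neBot, closure_Ioo hτ.ne]
    exact ⟨le_rfl, hτ.le⟩
  have lim1 : Tendsto (fun ε => f τ - f ε) (nhdsWithin 0 (Set.Ioo 0 τ))
      (nhds (f τ - f 0)) :=
    tendsto_const_nhds.sub (h0.mono_left (nhdsWithin_mono _ Set.Ioo_subset_Ioi_self))
  have lim2 : Tendsto (fun ε => ∫ ξ in ε..τ, deriv f ξ) (nhdsWithin 0 (Set.Ioo 0 τ))
      (nhds (∫ ξ in (0:ℝ)..τ, deriv f ξ)) := by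
    have hc := intervalIntegral.continuousOn_primitive_interval' hint
      (a := τ) (by rw [Set.uIcc_of_le hτ.le]; exact ⟨hτ.le, le_rfl⟩)
    have h1 := (hc 0 (by rw [Set.uIcc_of_le hτ.le]; exact ⟨le_rfl, hτ.le⟩)).tendsto
    have h2 : Tendsto (fun b => -∫ x in τ..b, deriv f x) (nhdsWithin 0 (Set.Ioo 0 τ))
        (nhds (-∫ x in τ..(0:ℝ), deriv f x)) :=
      (h1.mono_left (nhdsWithin_mono _
        (by rw [Set.uIcc_of_le hτ.le]; exact Set.Ioo_subset_Icc_self))).neg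
    have e1 : (fun ε => ∫ ξ in ε..τ, deriv f ξ) = fun b => -∫ x in τ..b, deriv f x := by
      funext b; rw [intervalIntegral.integral_symm]
    have e2 : (∫ ξ in (0:ℝ)..τ, deriv f ξ) = -∫ x in τ..(0:ℝ), deriv f x := by
      rw [intervalIntegral.integral_symm]
    rw [e1, e2]
    exact h2
  have heq2 : (fun ε => ∫ ξ in ε..τ, deriv f ξ) =ᶠ[nhdsWithin 0 (Set.Ioo 0 τ)]
      fun ε => f τ - f ε := eventually_nhdsWithin_of_forall key
  have := tendsto_nhds_unique (lim2.congr' heq2) lim1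
  linarith

/-- If `w`, suitably regular on `[0,1] × [0,T]`, satisfies the transformed
subdiffusion equation of the solid phase in the front-fixing variable
`v = (x − p τ^(α/2))/(L − p τ^(α/2))` (where `L = l₂/l₁`), then it satisfies the
associated integro-differential equation obtained by applying `I₀₊^α`. -/
theorem solid_integroDifferential_equation
    (α κ p L T : ℝ) (hα : α ∈ Set.Ioo (0:ℝ) 1) (hκ : 0 < κ) (hp : 0 < p)
    (hL : 0 < L) (hT : 0 < T)
    (w : ℝ → ℝ → ℝ)
    -- continuously differentiable in τ on (0, T]
    (hreg_τ : ∀ v ∈ Set.Icc (0:ℝ) 1, ContDiffOn ℝ 1 (fun τ => w v τ) (Set.Ioc 0 T))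
    -- twice continuously differentiable in v
    (hreg_v : ∀ τ ∈ Set.Ioc (0:ℝ) T, ContDiffOn ℝ 2 (fun v => w v τ) (Set.Icc 0 1))
    -- ∂w/∂τ integrable in time on (0, τ)
    (hint₁ : ∀ v ∈ Set.Ioo (0:ℝ) 1, ∀ τ ∈ Set.Ioc (0:ℝ) T,
      IntervalIntegrable (fun ξ => deriv (fun s => w v s) ξ) volume 0 τ)
    -- (ξ (p − L ξ^(−α/2)))⁻¹ ∂w/∂v integrable in time on (0, τ)
    (hint₂ : ∀ v ∈ Set.Ioo (0:ℝ) 1, ∀ τ ∈ Set.Ioc (0:ℝ) T,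
      IntervalIntegrable
        (fun ξ => (ξ * (p - L * ξ ^ (-(α / 2))))⁻¹ * deriv (fun y => w y ξ) v)
        volume 0 τ)
    -- (L − p ξ^(α/2))^(−2) ∂²w/∂v² integrable in time on (0, τ)
    (hint₃ : ∀ v ∈ Set.Ioo (0:ℝ) 1, ∀ τ ∈ Set.Ioc (0:ℝ) T,
      IntervalIntegrable
        (fun ξ => ((L - p * ξ ^ (α / 2)) ^ 2)⁻¹ * iteratedDeriv 2 (fun y => w y ξ) v)
        volume 0 τ)
    -- w(v, τ) → w(v, 0) as τ → 0⁺
    (hcont₀ : ∀ v ∈ Set.Icc (0:ℝ) 1,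
      Tendsto (fun τ => w v τ) (nhdsWithin 0 (Set.Ioi 0)) (nhds (w v 0)))
    -- the transformed subdiffusion equation for the solid phase
    (heq : ∀ v ∈ Set.Ioo (0:ℝ) 1, ∀ τ ∈ Set.Ioc (0:ℝ) T,
      (1 / Real.Gamma (1 - α)) *
          (∫ ξ in (0:ℝ)..τ, (τ - ξ) ^ (-α) * deriv (fun s => w v s) ξ) -
        (α * p * (v - 1) / (2 * Real.Gamma (1 - α))) *
          (∫ ξ in (0:ℝ)..τ,
            (τ - ξ) ^ (-α) * (ξ * (p - L * ξ ^ (-(α / 2))))⁻¹ *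
              deriv (fun y => w y ξ) v) =
        κ / (L - p * τ ^ (α / 2)) ^ 2 * iteratedDeriv 2 (fun y => w y τ) v) :
    ∀ v ∈ Set.Ioo (0:ℝ) 1, ∀ τ ∈ Set.Ioc (0:ℝ) T,
      w v τ = w v 0 +
        (α * p * (v - 1) / 2) *
          (∫ ξ in (0:ℝ)..τ,
            (ξ * (p - L * ξ ^ (-(α / 2))))⁻¹ * deriv (fun y => w y ξ) v) +
        (κ / Real.Gamma α) *
          ∫ ξ in (0:ℝ)..τ,
            (τ - ξ) ^ (α - 1) * ((L - p * ξ ^ (α / 2)) ^ 2)⁻¹ *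
              iteratedDeriv 2 (fun y => w y ξ) v := by
  intro v hv τ hτ
  obtain ⟨hα0, hα1⟩ := hα
  have hτ0 : 0 < τ := hτ.1
  have hτT : τ ≤ T := hτ.2
  have hΓα : 0 < Real.Gamma α := Real.Gamma_pos_of_pos hα0
  have hΓ1α : 0 < Real.Gamma (1 - α) := Real.Gamma_pos_of_pos (by linarith)
  have hg := hint₁ v hv τ hτ
  have hh := hint₂ v hv τ hτ
  have hFTC := ftc_limit hτ0 hτT (hreg_τ v (Set.Ioo_subset_Icc_self hv)) hg
    (hcont₀ v (Set.Ioo_subset_Icc_self hv))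
  obtain ⟨hGint, hGval⟩ := key_fubini hα0 hα1 hτ0 hg
  obtain ⟨hHint, hHval⟩ := key_fubini hα0 hα1 hτ0 hh
  -- pointwise multiplied equation
  have hpoint : ∀ s ∈ Set.Ioc (0:ℝ) τ,
      κ * ((τ - s) ^ (α - 1) *
          (((L - p * s ^ (α / 2)) ^ 2)⁻¹ * iteratedDeriv 2 (fun y => w y s) v))
      = (1 / Real.Gamma (1 - α)) *
          ((τ - s) ^ (α - 1) * ∫ ξ in (0:ℝ)..s, (s - ξ) ^ (-α) * deriv (fun t => w v t) ξ)
        - (α * p * (v - 1) / (2 * Real.Gamma (1 - α))) *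
          ((τ - s) ^ (α - 1) * ∫ ξ in (0:ℝ)..s,
            (s - ξ) ^ (-α) * ((ξ * (p - L * ξ ^ (-(α / 2))))⁻¹ * deriv (fun y => w y ξ) v)) := by
    intro s hs
    have h := heq v hv s ⟨hs.1, hs.2.trans hτT⟩
    have hassoc : (∫ ξ in (0:ℝ)..s,
          (s - ξ) ^ (-α) * (ξ * (p - L * ξ ^ (-(α / 2))))⁻¹ * deriv (fun y => w y ξ) v)
        = ∫ ξ in (0:ℝ)..s,
          (s - ξ) ^ (-α) * ((ξ * (p - L * ξ ^ (-(α / 2))))⁻¹ * deriv (fun y => w y ξ) v) := by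
      simp only [mul_assoc]
    rw [hassoc] at h
    linear_combination (-((τ - s) ^ (α - 1))) * h
  -- integrate the multiplied equation over (0, τ]
  have hsplit : ∫ s in Set.Ioc (0:ℝ) τ,
      κ * ((τ - s) ^ (α - 1) *
        (((L - p * s ^ (α / 2)) ^ 2)⁻¹ * iteratedDeriv 2 (fun y => w y s) v))
      = (1 / Real.Gamma (1 - α)) *
          (Real.Gamma α * Real.Gamma (1 - α) * ∫ ξ in (0:ℝ)..τ, deriv (fun t => w v t) ξ)
        - (α * p * (v - 1) / (2 * Real.Gamma (1 - α))) *
          (Real.Gamma α * Real.Gamma (1 - α) * ∫ ξ in (0:ℝ)..τ,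
            (ξ * (p - L * ξ ^ (-(α / 2))))⁻¹ * deriv (fun y => w y ξ) v) := by
    rw [MeasureTheory.setIntegral_congr_fun measurableSet_Ioc hpoint]
    rw [MeasureTheory.integral_sub (hGint.const_mul _) (hHint.const_mul _),
      MeasureTheory.integral_const_mul, MeasureTheory.integral_const_mul, hGval, hHval]
  rw [MeasureTheory.integral_const_mul] at hsplit
  -- identify the last integral of the goal
  have hlast : (∫ ξ in (0:ℝ)..τ,
        (τ - ξ) ^ (α - 1) * ((L - p * ξ ^ (α / 2)) ^ 2)⁻¹ * iteratedDeriv 2 (fun y => w y ξ) v)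
      = ∫ s in Set.Ioc (0:ℝ) τ,
        (τ - s) ^ (α - 1) *
          (((L - p * s ^ (α / 2)) ^ 2)⁻¹ * iteratedDeriv 2 (fun y => w y s) v) := by
    rw [intervalIntegral.integral_of_le hτ0.le]
    simp only [mul_assoc]
  rw [hFTC, hlast]
  set X := ∫ s in Set.Ioc (0:ℝ) τ,
    (τ - s) ^ (α - 1) *
      (((L - p * s ^ (α / 2)) ^ 2)⁻¹ * iteratedDeriv 2 (fun y => w y s) v) with hX
  set Gg := ∫ ξ in (0:ℝ)..τ, deriv (fun t => w v t) ξ with hGg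
  set Hh := ∫ ξ in (0:ℝ)..τ,
    (ξ * (p - L * ξ ^ (-(α / 2))))⁻¹ * deriv (fun y => w y ξ) v with hHh
  -- clean up hsplit
  have E3 : κ * X = Real.Gamma α * Gg - α * p * (v - 1) / 2 * (Real.Gamma α * Hh) := by
    rw [hsplit]
    field_simp
  have hXval : (κ / Real.Gamma α) * X = Gg - α * p * (v - 1) / 2 * Hh := by
    have hXeq : X = κ⁻¹ * (Real.Gamma α * Gg - α * p * (v - 1) / 2 * (Real.Gamma α * Hh)) := by
      rw [← E3]; field_simp
    rw [hXeq]
    field_simp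
  linarith [hXval]
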